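/- Let c > 0 and t₀ ∈ ℝ. Let g : ℝ → ℝ be a function which is twice differentiable on [t₀, ∞), with g(t) ≥ 0 for all t ≥ t₀, g(t) → 0 as t → +∞, and g''(t) ≥ 4c²·g(t) for all t ≥ t₀. Then there exist t₁ ≥ t₀ and B ≥ 0 such that g(t) ≤ B·e^{−2c·t} for all t ≥ t₁. -/

import Mathlib

open Filter Set Real

/-- If `g ≥ 0` is twice differentiable on `[t₀, ∞)`, tends to `0` at `+∞`, and
satisfies `g'' ≥ 4c²·g` there (with `c > 0`), then `g` decays exponentially:
`g t ≤ B·exp (-2c·t)` for all large `t`. -/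
theorem stmt14 (c t₀ : ℝ) (hc : 0 < c) (g : ℝ → ℝ)
    (hg1 : ∀ t ≥ t₀, DifferentiableAt ℝ g t)
    (hg2 : ∀ t ≥ t₀, DifferentiableAt ℝ (deriv g) t)
    (hpos : ∀ t ≥ t₀, 0 ≤ g t)
    (hlim : Filter.Tendsto g Filter.atTop (nhds 0))
    (hineq : ∀ t ≥ t₀, 4 * c ^ 2 * g t ≤ deriv (deriv g) t) :
    ∃ t₁ ≥ t₀, ∃ B ≥ (0 : ℝ), ∀ t ≥ t₁, g t ≤ B * Real.exp (-2 * c * t) := by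
  -- derivative of exp (a*t)
  have hE : ∀ (a t : ℝ), HasDerivAt (fun t => Real.exp (a * t)) (a * Real.exp (a * t)) t := by
    intro a t
    simpa [mul_comm] using (((hasDerivAt_id t).const_mul a).exp)
  -- h := g' + 2c g; φ := e^{-2ct} h is monotone on [t₀,∞)
  have hφderiv : ∀ t ≥ t₀, HasDerivAt (fun t => Real.exp (-(2*c) * t) * (deriv g t + 2*c * g t))
      (Real.exp (-(2*c) * t) * (deriv (deriv g) t - 4 * c ^ 2 * g t)) t := by
    intro t ht
    have H := (hE (-(2*c)) t).mul (((hg2 t ht).hasDerivAt).add (((hg1 t ht).hasDerivAt).const_mul (2*c)))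
    refine H.congr_deriv ?_
    simp only [Pi.add_apply]
    ring
  have hφmono : MonotoneOn (fun t => Real.exp (-(2*c) * t) * (deriv g t + 2*c * g t)) (Set.Ici t₀) := by
    apply monotoneOn_of_hasDerivWithinAt_nonneg (convex_Ici t₀)
      (f' := fun t => Real.exp (-(2*c) * t) * (deriv (deriv g) t - 4 * c ^ 2 * g t))
    · intro t ht
      exact ((hφderiv t ht).differentiableAt.continuousAt).continuousWithinAt
    · intro t ht
      rw [interior_Ici] at ht
      exact (hφderiv t ht.le).hasDerivWithinAt
    · intro t ht
      rw [interior_Ici] at ht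
      have := hineq t ht.le
      have := (Real.exp_pos (-(2*c) * t)).le
      nlinarith
  -- h ≤ 0 on [t₀,∞)
  have hB : ∀ t ≥ t₀, deriv g t + 2*c * g t ≤ 0 := by
    intro s hs
    by_contra hpos'
    push_neg at hpos'
    set δ : ℝ := Real.exp (-(2*c) * s) * (deriv g s + 2*c * g s) with hδ
    have hδpos : 0 < δ := mul_pos (Real.exp_pos _) hpos'
    -- ψ := e^{2ct} g - δ/(4c) e^{4ct} is monotone on [s,∞)
    have hψderiv : ∀ t ≥ t₀, HasDerivAt
        (fun t => Real.exp ((2*c) * t) * g t - δ/(4*c) * Real.exp ((4*c) * t))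
        (Real.exp ((2*c) * t) * (deriv g t + 2*c * g t) - δ * Real.exp ((4*c) * t)) t := by
      intro t ht
      have H := ((hE (2*c) t).mul (hg1 t ht).hasDerivAt).sub ((hE (4*c) t).const_mul (δ/(4*c)))
      refine H.congr_deriv ?_
      field_simp
      ring
    have hψmono : MonotoneOn
        (fun t => Real.exp ((2*c) * t) * g t - δ/(4*c) * Real.exp ((4*c) * t)) (Set.Ici s) := by
      apply monotoneOn_of_hasDerivWithinAt_nonneg (convex_Ici s)
        (f' := fun t => Real.exp ((2*c) * t) * (deriv g t + 2*c * g t) - δ * Real.exp ((4*c) * t))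
      · intro t ht
        exact ((hψderiv t (hs.trans ht)).differentiableAt.continuousAt).continuousWithinAt
      · intro t ht
        rw [interior_Ici] at ht
        exact (hψderiv t (hs.trans ht.le)).hasDerivWithinAt
      · intro t ht
        rw [interior_Ici] at ht
        have hts : s ≤ t := ht.le
        have hmono := hφmono hs (hs.trans hts) hts
        have h1 : δ ≤ Real.exp (-(2*c) * t) * (deriv g t + 2*c * g t) := hmono
        have h2 : Real.exp ((2*c) * t) * Real.exp (-(2*c) * t) = 1 := by
          rw [← Real.exp_add]
          norm_num
        have h3 : Real.exp ((2*c) * t) * Real.exp ((2*c) * t) = Real.exp ((4*c) * t) := by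
          rw [← Real.exp_add]; ring_nf
        have hep := Real.exp_pos ((2*c) * t)
        have h4 : Real.exp ((2*c) * t) * δ ≤ deriv g t + 2*c * g t := by
          have := mul_le_mul_of_nonneg_left h1 hep.le
          calc Real.exp ((2*c) * t) * δ
              ≤ Real.exp ((2*c) * t) * (Real.exp (-(2*c) * t) * (deriv g t + 2*c * g t)) := this
            _ = (Real.exp ((2*c) * t) * Real.exp (-(2*c) * t)) * (deriv g t + 2*c * g t) := by ring
            _ = deriv g t + 2*c * g t := by rw [h2, one_mul]
        have h5 : Real.exp ((4*c) * t) * δ ≤ Real.exp ((2*c) * t) * (deriv g t + 2*c * g t) := by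
          calc Real.exp ((4*c) * t) * δ
              = Real.exp ((2*c) * t) * (Real.exp ((2*c) * t) * δ) := by rw [← h3]; ring
            _ ≤ Real.exp ((2*c) * t) * (deriv g t + 2*c * g t) :=
                mul_le_mul_of_nonneg_left h4 hep.le
        linarith
    -- lower bound on g for t ≥ s
    set K : ℝ := Real.exp ((2*c) * s) * g s - δ/(4*c) * Real.exp ((4*c) * s) with hK
    have hgl : ∀ t ≥ s, K * Real.exp (-(2*c) * t) + δ/(4*c) * Real.exp ((2*c) * t) ≤ g t := by
      intro t ht
      have hm := hψmono (Set.self_mem_Ici) ht ht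
      have h2 : Real.exp ((2*c) * t) * Real.exp (-(2*c) * t) = 1 := by
        rw [← Real.exp_add]; norm_num
      have h3 : Real.exp ((2*c) * t) * Real.exp ((2*c) * t) = Real.exp ((4*c) * t) := by
        rw [← Real.exp_add]; ring_nf
      have h4 : Real.exp ((4*c) * t) * Real.exp (-(2*c) * t) = Real.exp ((2*c) * t) := by
        rw [← Real.exp_add]; ring_nf
      have hepn := Real.exp_pos (-(2*c) * t)
      have key : K * Real.exp (-(2*c) * t) ≤ g t - δ/(4*c) * Real.exp ((2*c) * t) := by
        have hm' := mul_le_mul_of_nonneg_right hm hepn.le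
        calc K * Real.exp (-(2*c) * t)
            ≤ (Real.exp ((2*c) * t) * g t - δ/(4*c) * Real.exp ((4*c) * t)) *
              Real.exp (-(2*c) * t) := hm'
          _ = g t * (Real.exp ((2*c) * t) * Real.exp (-(2*c) * t))
              - δ/(4*c) * (Real.exp ((4*c) * t) * Real.exp (-(2*c) * t)) := by ring
          _ = g t - δ/(4*c) * Real.exp ((2*c) * t) := by rw [h2, h4]; ring
      linarith
    -- the lower bound tends to atTop
    have hT1 : Tendsto (fun t : ℝ => K * Real.exp (-(2*c) * t)) atTop (nhds 0) := by
      have : Tendsto (fun t : ℝ => Real.exp (-(2*c) * t)) atTop (nhds 0) := by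
        apply Real.tendsto_exp_atBot.comp
        exact Tendsto.const_mul_atTop_of_neg (by linarith) tendsto_id
      simpa using this.const_mul K
    have hT2 : Tendsto (fun t : ℝ => δ/(4*c) * Real.exp ((2*c) * t)) atTop atTop := by
      apply Tendsto.const_mul_atTop (by positivity)
      exact Real.tendsto_exp_atTop.comp (Tendsto.const_mul_atTop (by linarith) tendsto_id)
    have hT : Tendsto (fun t : ℝ => K * Real.exp (-(2*c) * t) + δ/(4*c) * Real.exp ((2*c) * t))
        atTop atTop := hT1.add_atTop hT2
    have : Tendsto g atTop atTop :=
      tendsto_atTop_mono' atTop (eventually_atTop.2 ⟨s, hgl⟩) hT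
    exact not_tendsto_atTop_of_tendsto_nhds hlim this
  -- e^{2ct} g is antitone on [t₀,∞)
  have hGderiv : ∀ t ≥ t₀, HasDerivAt (fun t => Real.exp ((2*c) * t) * g t)
      (Real.exp ((2*c) * t) * (deriv g t + 2*c * g t)) t := by
    intro t ht
    have H := (hE (2*c) t).mul (hg1 t ht).hasDerivAt
    refine H.congr_deriv ?_
    ring
  have hanti : AntitoneOn (fun t => Real.exp ((2*c) * t) * g t) (Set.Ici t₀) := by
    apply antitoneOn_of_hasDerivWithinAt_nonpos (convex_Ici t₀)
      (f' := fun t => Real.exp ((2*c) * t) * (deriv g t + 2*c * g t))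
    · intro t ht
      exact ((hGderiv t ht).differentiableAt.continuousAt).continuousWithinAt
    · intro t ht
      rw [interior_Ici] at ht
      exact (hGderiv t ht.le).hasDerivWithinAt
    · intro t ht
      rw [interior_Ici] at ht
      exact mul_nonpos_of_nonneg_of_nonpos (Real.exp_pos _).le (hB t ht.le)
  refine ⟨t₀, le_refl _, Real.exp ((2*c) * t₀) * g t₀,
    mul_nonneg (Real.exp_pos _).le (hpos t₀ (le_refl _)), fun t ht => ?_⟩
  have hm := hanti Set.self_mem_Ici ht ht
  have hee : Real.exp ((2*c) * t) * Real.exp (-2 * c * t) = 1 := by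
    rw [← Real.exp_add]
    norm_num
  calc g t = (Real.exp ((2*c) * t) * g t) * Real.exp (-2 * c * t) := by
        rw [mul_comm (Real.exp ((2*c) * t)) (g t), mul_assoc, hee, mul_one]
    _ ≤ (Real.exp ((2*c) * t₀) * g t₀) * Real.exp (-2 * c * t) :=
        mul_le_mul_of_nonneg_right hm (Real.exp_pos _).le
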